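/- Under the thick-edge assumptions: lim_{a→∞} ψ′(a) = (∫ s dμ_Σ(s))/δ > 0; lim_{a→∞} ψ(a) = +∞ and lim_{a ↓ sup supp(μ_T)} ψ(a) = +∞; consequently, the set of critical points of ψ in (sup supp(μ_T), ∞) is nonempty and bounded from above. -/

import Mathlib

open MeasureTheory ProbabilityTheory Filter Topology
open scoped ENNReal NNReal

noncomputable section

namespace SpecGLM

/-- The (topological) support of a measure on `ℝ`. -/
def msupport (μ : Measure ℝ) : Set ℝ := {x | ∀ U ∈ nhds x, μ U ≠ 0}

/-- `k`-th largest eigenvalue (1-indexed) of a real symmetric matrix; junk value `0`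
if the matrix is not symmetric. -/
def lambdaK {d : ℕ} (A : Matrix (Fin d) (Fin d) ℝ) (k : ℕ) : ℝ := by
  classical
  exact if hA : A.IsHermitian then
    (((List.ofFn hA.eigenvalues).insertionSort (· ≥ ·)).getD (k - 1) 0)
  else 0

/-- Empirical distribution of a finite family of real numbers. -/
def esdVec {n : ℕ} (v : Fin n → ℝ) : Measure ℝ :=
  (n : ℝ≥0∞)⁻¹ • ∑ i, Measure.dirac (v i)

/-- Empirical spectral distribution of a real symmetric matrix. -/
def esd {d : ℕ} (A : Matrix (Fin d) (Fin d) ℝ) : Measure ℝ := by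
  classical
  exact if hA : A.IsHermitian then esdVec hA.eigenvalues else 0

/-- Weak convergence of a sequence of measures on `ℝ`. -/
def WeakTendsto (ν : ℕ → Measure ℝ) (ν' : Measure ℝ) : Prop :=
  ∀ f : BoundedContinuousFunction ℝ ℝ,
    Tendsto (fun k => ∫ x, f x ∂(ν k)) atTop (𝓝 (∫ x, f x ∂ν'))

/-- Convergence in probability of a sequence of real random variables to a constant. -/
def TendstoInProbability {Ω : Type*} [MeasurableSpace Ω] (μ : Measure Ω)
    (X : ℕ → Ω → ℝ) (c : ℝ) : Prop :=
  ∀ ε : ℝ, 0 < ε → Tendsto (fun k => μ {ω | ε ≤ |X k ω - c|}) atTop (𝓝 0)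

/-- Almost sure convergence of a sequence of real random variables to a constant. -/
def TendstoAlmostSurely {Ω : Type*} [MeasurableSpace Ω] (μ : Measure Ω)
    (X : ℕ → Ω → ℝ) (c : ℝ) : Prop :=
  ∀ᵐ ω ∂μ, Tendsto (fun k => X k ω) atTop (𝓝 c)

/-- Pseudo-Lipschitz functions of finite order. -/
def PseudoLipschitz (f : ℝ → ℝ) : Prop :=
  ∃ (j : ℕ) (L : ℝ), ∀ x y : ℝ,
    |f x - f y| ≤ L * |x - y| * (1 + |x| ^ (j - 1) + |y| ^ (j - 1))

/-- A finite family of real random variables is i.i.d. with common law `ν`. -/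
def IIDLaw {Ω : Type*} [MeasurableSpace Ω] (μ : Measure Ω) {ι : Type*} [Fintype ι]
    (f : ι → Ω → ℝ) (ν : Measure ℝ) : Prop :=
  (∀ i, Measurable (f i)) ∧ (∀ i, Measure.map (f i) μ = ν) ∧
    iIndepFun f μ

/-- The positive semidefinite square root of a matrix (junk value `0` if not psd). -/
def sqrtMat {d : ℕ} (A : Matrix (Fin d) (Fin d) ℝ) : Matrix (Fin d) (Fin d) ℝ := by
  classical
  exact if hA : A.PosSemidef then
    hA.1.eigenvectorUnitary.1 *
      Matrix.diagonal ((fun x : ℝ => (RCLike.ofReal x : ℝ)) ∘ (Real.sqrt ∘ hA.1.eigenvalues)) *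
      (star hA.1.eigenvectorUnitary : Matrix (Fin d) (Fin d) ℝ)
  else 0

/-- Euclidean norm of a vector. -/
def vnorm {d : ℕ} (v : Fin d → ℝ) : ℝ := Real.sqrt (∑ i, v i ^ 2)

/-- Euclidean inner product. -/
def dot {d : ℕ} (u v : Fin d → ℝ) : ℝ := ∑ i, u i * v i

/-- A probability space bundled as a structure. -/
structure ProbSpace where
  carrier : Type
  inst : MeasurableSpace carrier
  meas : @Measure carrier inst
  prob : @IsProbabilityMeasure carrier inst meas

attribute [instance] ProbSpace.inst ProbSpace.prob

end SpecGLM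
namespace SpecGLM

/-- The complex upper half-plane. -/
def UH : Set ℂ := {z | 0 < z.im}

/-- Meromorphy at a point: some power of `(· - z)` times `f` is analytic at `z`. -/
def MeroAt (f : ℂ → ℂ) (z : ℂ) : Prop :=
  ∃ k : ℕ, AnalyticAt ℂ (fun w => (w - z) ^ k * f w) z

/-- Data for the deterministic random-matrix system: aspect ratio and the limiting
spectral distributions `μ_T`, `μ_Σ`. -/
structure RMT where
  delta : ℝ
  muT : Measure ℝ
  muS : Measure ℝ

namespace RMT

variable (R : RMT)

/-- `sup supp μ_T`. -/
def tauT : ℝ := sSup (msupport R.muT)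

/-- `sup supp μ_Σ`. -/
def sSig : ℝ := sSup (msupport R.muS)

/-- `inf supp μ_Σ`. -/
def iSig : ℝ := sInf (msupport R.muS)

/-- `∫ s dμ_Σ(s)`. -/
def meanS : ℝ := ∫ s, s ∂ R.muS

/-- `c(a) = ∫ t/(a - t) dμ_T(t)`. -/
def cfun (a : ℝ) : ℝ := ∫ t, t / (a - t) ∂ R.muT

/-- The left end `s(a)` of the admissible interval for `γ(a)`. -/
def sfun (a : ℝ) : ℝ :=
  if 0 < R.cfun a then R.cfun a * R.sSig
  else if R.cfun a < 0 then R.cfun a * R.iSig else 0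

/-- `γ(a)` is the unique solution in `(s(a), ∞)` of
`1 = (1/δ) ∫ s/(γ(a) - c(a)s) dμ_Σ(s)`. -/
def IsGammaFun (γ : ℝ → ℝ) : Prop :=
  ∀ a, R.tauT < a →
    R.sfun a < γ a ∧ 1 = (1 / R.delta) * ∫ s, s / (γ a - R.cfun a * s) ∂ R.muS ∧
      ∀ g, R.sfun a < g →
        1 = (1 / R.delta) * ∫ s, s / (g - R.cfun a * s) ∂ R.muS → g = γ a

/-- Basic assumptions on the data. -/
def Basic : Prop :=
  0 < R.delta ∧ IsProbabilityMeasure R.muT ∧ IsProbabilityMeasure R.muS ∧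
    (∃ C : ℝ, msupport R.muT ⊆ Set.Icc (-C) C) ∧
    (∃ l u : ℝ, 0 < l ∧ msupport R.muS ⊆ Set.Icc l u) ∧
    R.muT ≠ Measure.dirac 0 ∧ R.muS ≠ Measure.dirac 0 ∧ 0 < R.tauT

/-- Thick-edge assumptions. -/
def ThickEdge : Prop :=
  Tendsto (fun a => ∫ t, t / (a - t) ∂ R.muT) (𝓝[>] R.tauT) atTop ∧
  Tendsto (fun a => ∫ t, t ^ 2 / (a - t) ^ 2 ∂ R.muT) (𝓝[>] R.tauT) atTop ∧
  Tendsto (fun w => |∫ s, s / (s - w) ∂ R.muS|) (𝓝[>] R.sSig) atTop ∧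
  Tendsto (fun w => ∫ s, s ^ 2 / (s - w) ^ 2 ∂ R.muS) (𝓝[>] R.sSig) atTop ∧
  Tendsto (fun w => ∫ s, s ^ 3 / (s - w) ^ 2 ∂ R.muS) (𝓝[>] R.sSig) atTop ∧
  Tendsto (fun w => |∫ s, s / (s - w) ∂ R.muS|) (𝓝[<] R.iSig) atTop ∧
  Tendsto (fun w => ∫ s, s ^ 2 / (s - w) ^ 2 ∂ R.muS) (𝓝[<] R.iSig) atTop ∧
  Tendsto (fun w => ∫ s, s ^ 3 / (s - w) ^ 2 ∂ R.muS) (𝓝[<] R.iSig) atTop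

/-- The system of equations satisfied by `(m(z), m₁(z), m₂(z))` at `z`. -/
def SystemEqAt (z w w1 w2 : ℂ) : Prop :=
  (-(z * w) = (1 - (R.delta : ℂ)) +
      (R.delta : ℂ) * ∫ t, (1 + w1 * (t : ℂ))⁻¹ ∂ R.muT) ∧
  (-(z * w) = ∫ s, (1 + w2 * (s : ℂ))⁻¹ ∂ R.muS) ∧
  (-(z * w) = 1 + (R.delta : ℂ) * z * w1 * w2)

/-- `(m, m₁, m₂)` is the (unique) solution of the system, subject to
`m(z) ∈ ℍ`, `m₁(z) ∈ ℍ`, `z m₂(z) ∈ ℍ`. -/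
def IsSystemSolution (m m1 m2 : ℂ → ℂ) : Prop :=
  ∀ z ∈ UH,
    m z ∈ UH ∧ m1 z ∈ UH ∧ z * m2 z ∈ UH ∧ R.SystemEqAt z (m z) (m1 z) (m2 z) ∧
    ∀ w w1 w2 : ℂ, w ∈ UH → w1 ∈ UH → z * w2 ∈ UH → R.SystemEqAt z w w1 w2 →
      w = m z ∧ w1 = m1 z ∧ w2 = m2 z

/-- `I₁(z, z̄) = ∫ t²/|1 + m₁(z)t|² dμ_T(t)`. -/
def I1sq (m1 : ℂ → ℂ) (z : ℂ) : ℝ :=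
  ∫ t, t ^ 2 / Complex.normSq (1 + m1 z * (t : ℂ)) ∂ R.muT

/-- `I₂(z, z̄) = ∫ s²/|1 + m₂(z)s|² dμ_Σ(s)`. -/
def I2sq (m2 : ℂ → ℂ) (z : ℂ) : ℝ :=
  ∫ s, s ^ 2 / Complex.normSq (1 + m2 z * (s : ℂ)) ∂ R.muS

end RMT

/-- `m` is the Stieltjes transform of the measure `ν` on `ℝ`. -/
def IsStieltjesOf (ν : Measure ℝ) (m : ℂ → ℂ) : Prop :=
  ∀ z ∈ UH, m z = ∫ x, ((x : ℂ) - z)⁻¹ ∂ν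

end SpecGLM
namespace SpecGLM

/-- `ψ(a) = a γ(a)`. -/
def psifun (γ : ℝ → ℝ) (a : ℝ) : ℝ := a * γ a

end SpecGLM
namespace SpecGLM


/-! ### Auxiliary lemmas -/

section Aux

open Set

lemma msupport_compl_null (μ : Measure ℝ) : μ (msupport μ)ᶜ = 0 := by
  have hx : ∀ x : ((msupport μ)ᶜ : Set ℝ), ∃ V : Set ℝ, IsOpen V ∧ (x : ℝ) ∈ V ∧ μ V = 0 := by
    rintro ⟨x, hx⟩
    simp only [Set.mem_compl_iff, msupport, Set.mem_setOf_eq, not_forall] at hx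
    obtain ⟨U, hU, hU0⟩ := hx
    obtain ⟨V, hVU, hVopen, hxV⟩ := mem_nhds_iff.mp hU
    push_neg at hU0
    exact ⟨V, hVopen, hxV, le_antisymm (hU0 ▸ measure_mono hVU) bot_le⟩
  choose V hVo hxV hV0 using hx
  obtain ⟨T, hTc, hTU⟩ := TopologicalSpace.isOpen_iUnion_countable V hVo
  have hsub : ((msupport μ)ᶜ : Set ℝ) ⊆ ⋃ i ∈ T, V i := by
    intro x hxm
    rw [hTU]
    exact Set.mem_iUnion.mpr ⟨⟨x, hxm⟩, hxV _⟩
  refine le_antisymm (le_trans (measure_mono hsub) ?_) bot_le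
  exact le_of_eq ((measure_biUnion_null_iff hTc).mpr (fun i _ => hV0 i))

lemma ae_mem_msupport (μ : Measure ℝ) : ∀ᵐ x ∂μ, x ∈ msupport μ := by
  rw [MeasureTheory.ae_iff]
  exact msupport_compl_null μ

lemma msupport_nonempty (μ : Measure ℝ) [IsProbabilityMeasure μ] : (msupport μ).Nonempty := by
  by_contra h
  rw [Set.not_nonempty_iff_eq_empty] at h
  have h2 := msupport_compl_null μ
  rw [h, Set.compl_empty] at h2
  simpa [h2] using (measure_univ (μ := μ))

lemma integrable_of_ae_bounded {μ : Measure ℝ} [IsFiniteMeasure μ] {f : ℝ → ℝ}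
    (hm : AEStronglyMeasurable f μ) {b : ℝ} (hb : ∀ᵐ x ∂μ, |f x| ≤ b) :
    Integrable f μ :=
  Integrable.mono' (integrable_const b) hm (by simpa [Real.norm_eq_abs] using hb)

lemma abs_integral_le {μ : Measure ℝ} [IsProbabilityMeasure μ] {f : ℝ → ℝ} {b : ℝ}
    (hb : ∀ᵐ x ∂μ, |f x| ≤ b) : |∫ x, f x ∂μ| ≤ b := by
  have h2 : ∀ᵐ x ∂μ, ‖f x‖ ≤ b := by simpa [Real.norm_eq_abs] using hb
  have := norm_integral_le_of_norm_le (μ := μ) (f := f) (integrable_const b) h2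
  simpa [Real.norm_eq_abs] using this

end Aux


section Setup

variable {R : RMT} {C l u : ℝ}

lemma sig_bounds (hprobS : IsProbabilityMeasure R.muS)
    (hsupp : msupport R.muS ⊆ Set.Icc l u) :
    l ≤ R.iSig ∧ R.iSig ≤ u ∧ l ≤ R.sSig ∧ R.sSig ≤ u := by
  obtain ⟨x, hx⟩ := msupport_nonempty R.muS
  obtain ⟨hlx, hxu⟩ := hsupp hx
  have hbdd : BddAbove (msupport R.muS) := ⟨u, fun y hy => (hsupp hy).2⟩
  have hbddb : BddBelow (msupport R.muS) := ⟨l, fun y hy => (hsupp hy).1⟩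
  have hne : (msupport R.muS).Nonempty := ⟨x, hx⟩
  refine ⟨le_csInf hne (fun y hy => (hsupp hy).1),
    le_trans (csInf_le hbddb hx) hxu,
    le_trans hlx (le_csSup hbdd hx),
    csSup_le hne (fun y hy => (hsupp hy).2)⟩

lemma aeS (hsupp : msupport R.muS ⊆ Set.Icc l u) :
    ∀ᵐ s ∂ R.muS, l ≤ s ∧ s ≤ u ∧ R.iSig ≤ s ∧ s ≤ R.sSig := by
  filter_upwards [ae_mem_msupport R.muS] with s hs
  have hbdd : BddAbove (msupport R.muS) := ⟨u, fun y hy => (hsupp hy).2⟩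
  have hbddb : BddBelow (msupport R.muS) := ⟨l, fun y hy => (hsupp hy).1⟩
  exact ⟨(hsupp hs).1, (hsupp hs).2, csInf_le hbddb hs, le_csSup hbdd hs⟩

lemma aeT (hsuppT : msupport R.muT ⊆ Set.Icc (-C) C) :
    ∀ᵐ t ∂ R.muT, |t| ≤ C ∧ t ≤ R.tauT := by
  filter_upwards [ae_mem_msupport R.muT] with t ht
  have hbdd : BddAbove (msupport R.muT) := ⟨C, fun y hy => (hsuppT hy).2⟩
  exact ⟨abs_le.mpr ⟨(hsuppT ht).1, (hsuppT ht).2⟩, le_csSup hbdd ht⟩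

lemma meanS_bounds (hprobS : IsProbabilityMeasure R.muS) (hl : 0 < l)
    (hsupp : msupport R.muS ⊆ Set.Icc l u) :
    l ≤ R.meanS ∧ R.meanS ≤ u := by
  have hae := aeS hsupp
  have hint : Integrable (fun s : ℝ => s) R.muS := by
    refine integrable_of_ae_bounded (b := max (-l) u) (aestronglyMeasurable_id) ?_
    filter_upwards [hae] with s hs
    exact abs_le.mpr ⟨by linarith [hs.1, le_max_left (-l) u], by linarith [hs.2.1, le_max_right (-l) u]⟩
  constructor
  · have := integral_mono_ae (integrable_const l) hint
      (by filter_upwards [hae] with s hs using hs.1)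
    simpa [RMT.meanS] using this
  · have := integral_mono_ae hint (integrable_const u)
      (by filter_upwards [hae] with s hs using hs.2.1)
    simpa [RMT.meanS] using this

lemma integrable_S_id (hl : 0 < l) (hsupp : msupport R.muS ⊆ Set.Icc l u)
    [IsFiniteMeasure R.muS] :
    Integrable (fun s : ℝ => s) R.muS := by
  refine integrable_of_ae_bounded (b := max (-l) u) (aestronglyMeasurable_id) ?_
  filter_upwards [aeS hsupp] with s hs
  exact abs_le.mpr ⟨by linarith [hs.1, le_max_left (-l) u], by linarith [hs.2.1, le_max_right (-l) u]⟩

end Setup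


section Cfun

variable {R : RMT} {C : ℝ}

lemma C_nonneg (hprobT : IsProbabilityMeasure R.muT)
    (hsuppT : msupport R.muT ⊆ Set.Icc (-C) C) : 0 ≤ C := by
  obtain ⟨x, hx⟩ := msupport_nonempty R.muT
  obtain ⟨h1, h2⟩ := hsuppT hx
  linarith

lemma cfun_abs_le (hprobT : IsProbabilityMeasure R.muT)
    (hsuppT : msupport R.muT ⊆ Set.Icc (-C) C) {a : ℝ} (ha : R.tauT < a) :
    |R.cfun a| ≤ C / (a - R.tauT) := by
  have hC0 := C_nonneg hprobT hsuppT
  refine abs_integral_le ?_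
  filter_upwards [aeT hsuppT] with t ht
  have hpos : 0 < a - t := by linarith [ht.2]
  have h1 : |t / (a - t)| = |t| / (a - t) := by
    rw [abs_div, abs_of_pos hpos]
  rw [h1]
  exact div_le_div₀ hC0 ht.1 (by linarith) (by linarith [ht.2])

lemma cfun_deriv_abs_le (hprobT : IsProbabilityMeasure R.muT)
    (hsuppT : msupport R.muT ⊆ Set.Icc (-C) C) {a : ℝ} (ha : R.tauT < a) :
    |∫ t, -(t / (a - t) ^ 2) ∂ R.muT| ≤ C / (a - R.tauT) ^ 2 := by
  have hC0 := C_nonneg hprobT hsuppT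
  refine abs_integral_le ?_
  filter_upwards [aeT hsuppT] with t ht
  have hpos : 0 < a - t := by linarith [ht.2]
  have h1 : |(-(t / (a - t) ^ 2))| = |t| / (a - t) ^ 2 := by
    rw [abs_neg, abs_div, abs_of_pos (pow_pos hpos 2)]
  rw [h1]
  refine div_le_div₀ hC0 ht.1 (by nlinarith) ?_
  exact pow_le_pow_left₀ (by linarith) (by linarith [ht.2]) 2

lemma hasDerivAt_cfun (hprobT : IsProbabilityMeasure R.muT)
    (hsuppT : msupport R.muT ⊆ Set.Icc (-C) C) {a : ℝ} (ha : R.tauT < a) :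
    HasDerivAt R.cfun (∫ t, -(t / (a - t) ^ 2) ∂ R.muT) a := by
  have hC0 := C_nonneg hprobT hsuppT
  set ε := (a - R.tauT) / 2 with hε
  have hεpos : 0 < ε := by simp [hε]; linarith
  have hmeas : ∀ x : ℝ, AEStronglyMeasurable (fun t => t / (x - t)) R.muT :=
    fun x => (measurable_id.div (measurable_const.sub measurable_id)).aestronglyMeasurable
  have key := hasDerivAt_integral_of_dominated_loc_of_deriv_le (μ := R.muT)
    (F := fun x t => t / (x - t)) (F' := fun x t => -(t / (x - t) ^ 2))
    (x₀ := a) (bound := fun _ => C / ε ^ 2) (Metric.ball_mem_nhds a hεpos)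
    (Filter.Eventually.of_forall fun x => hmeas x)
    ?_ ?_ ?_ (integrable_const _) ?_
  · exact key.2
  · -- Integrable (F a)
    refine integrable_of_ae_bounded (b := C / (a - R.tauT)) (hmeas a) ?_
    filter_upwards [aeT hsuppT] with t ht
    have hpos : 0 < a - t := by linarith [ht.2]
    rw [abs_div, abs_of_pos hpos]
    exact div_le_div₀ hC0 ht.1 (by linarith) (by linarith [ht.2])
  · exact ((measurable_id.div ((measurable_const.sub measurable_id).pow measurable_const)).neg).aestronglyMeasurable
  · -- bound
    filter_upwards [aeT hsuppT] with t ht x hx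
    rw [Metric.mem_ball, Real.dist_eq, abs_lt] at hx
    have hpos : ε < x - t := by linarith [ht.2, hx.1, hx.2]
    have h1 : ‖(-(t / (x - t) ^ 2))‖ = |t| / (x - t) ^ 2 := by
      rw [Real.norm_eq_abs, abs_neg, abs_div, abs_of_pos (by nlinarith : (0:ℝ) < (x - t) ^ 2)]
    rw [h1]
    exact div_le_div₀ hC0 ht.1 (by positivity) (pow_le_pow_left₀ (le_of_lt hεpos) (le_of_lt hpos) 2)
  · -- differentiability
    filter_upwards [aeT hsuppT] with t ht x hx
    rw [Metric.mem_ball, Real.dist_eq, abs_lt] at hx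
    have hpos : 0 < x - t := by linarith [ht.2, hx.1, hx.2]
    have h1 : HasDerivAt (fun y : ℝ => y - t) 1 x := (hasDerivAt_id x).sub_const t
    have h2 : HasDerivAt (fun y : ℝ => (y - t)⁻¹) (-1 / (x - t) ^ 2) x := by
      exact h1.inv (ne_of_gt hpos)
    have h3 := h2.const_mul t
    have he1 : (fun y : ℝ => t / (y - t)) = (fun y : ℝ => t * (y - t)⁻¹) := by
      funext y; rw [div_eq_mul_inv]
    have he2 : -(t / (x - t) ^ 2) = t * (-1 / (x - t) ^ 2) := by ring
    rw [he1, he2]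
    exact h3
end Cfun


section Gamma

variable {R : RMT} {l u : ℝ} {γ : ℝ → ℝ}

lemma m_pos (hδ : 0 < R.delta) (hprobS : IsProbabilityMeasure R.muS) (hl : 0 < l)
    (hsupp : msupport R.muS ⊆ Set.Icc l u) : 0 < R.meanS / R.delta :=
  div_pos (lt_of_lt_of_le hl (meanS_bounds hprobS hl hsupp).1) hδ

lemma ae_cs_le_sfun (hsupp : msupport R.muS ⊆ Set.Icc l u) (a : ℝ) :
    ∀ᵐ s ∂ R.muS, R.cfun a * s ≤ R.sfun a := by
  filter_upwards [aeS hsupp] with s hs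
  rcases lt_trichotomy (R.cfun a) 0 with hc | hc | hc
  · rw [RMT.sfun, if_neg (by linarith), if_pos hc]
    exact mul_le_mul_of_nonpos_left hs.2.2.1 (le_of_lt hc)
  · simp [RMT.sfun, hc]
  · rw [RMT.sfun, if_pos hc]
    exact mul_le_mul_of_nonneg_left hs.2.2.2 (le_of_lt hc)

lemma gamma_core (hδ : 0 < R.delta) (hprobS : IsProbabilityMeasure R.muS) (hl : 0 < l)
    (hsupp : msupport R.muS ⊆ Set.Icc l u) (hγ : R.IsGammaFun γ)
    {a : ℝ} (ha : R.tauT < a) :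
    Integrable (fun s => s / (γ a - R.cfun a * s)) R.muS ∧
    (∫ s, s / (γ a - R.cfun a * s) ∂ R.muS) = R.delta ∧
    R.meanS / R.delta - |R.cfun a| * u ≤ γ a ∧
    γ a ≤ R.meanS / R.delta + |R.cfun a| * u := by
  obtain ⟨hs_lt, hEq, _⟩ := hγ a ha
  have hm := m_pos hδ hprobS hl hsupp
  have hmuS_ne : R.muS ≠ 0 := IsProbabilityMeasure.ne_zero R.muS
  have hNeBot : (ae R.muS).NeBot := ae_neBot.mpr hmuS_ne
  have hIeq : (∫ s, s / (γ a - R.cfun a * s) ∂ R.muS) = R.delta := by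
    rw [eq_comm, one_div, inv_mul_eq_one₀ (ne_of_gt hδ)] at hEq
    linarith
  have hJint : Integrable (fun s => s / (γ a - R.cfun a * s)) R.muS := by
    by_contra hni
    rw [integral_undef hni] at hIeq
    exact (ne_of_gt hδ) hIeq.symm
  have hden : ∀ᵐ s ∂ R.muS, 0 < γ a - R.cfun a * s ∧
      γ a - R.cfun a * s ≤ γ a + |R.cfun a| * u ∧
      γ a - |R.cfun a| * u ≤ γ a - R.cfun a * s ∧ 0 ≤ s ∧ s ≤ u := by
    filter_upwards [ae_cs_le_sfun hsupp a, aeS hsupp] with s hcs hs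
    have habs : |R.cfun a * s| ≤ |R.cfun a| * u := by
      rw [abs_mul]
      refine mul_le_mul_of_nonneg_left ?_ (abs_nonneg _)
      rw [abs_of_nonneg (by linarith [hs.1] : (0:ℝ) ≤ s)]
      exact hs.2.1
    rw [abs_le] at habs
    refine ⟨by linarith, by linarith, by linarith, by linarith [hs.1], hs.2.1⟩
  have hgu_pos : 0 < γ a + |R.cfun a| * u := by
    obtain ⟨s, hs⟩ := hden.exists
    linarith [hs.1, hs.2.1]
  have hSid : Integrable (fun s : ℝ => s) R.muS := integrable_S_id hl hsupp
  -- lower bound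
  have hlow : R.meanS / R.delta - |R.cfun a| * u ≤ γ a := by
    have hcomp : ∀ᵐ s ∂ R.muS, s / (γ a + |R.cfun a| * u) ≤ s / (γ a - R.cfun a * s) := by
      filter_upwards [hden] with s hs
      exact div_le_div_of_nonneg_left hs.2.2.2.1 hs.1 hs.2.1
    have hmono := integral_mono_ae (hSid.div_const _) hJint hcomp
    rw [integral_div] at hmono
    rw [hIeq] at hmono
    have h1 : R.meanS ≤ R.delta * (γ a + |R.cfun a| * u) :=
      (div_le_iff₀ hgu_pos).mp (le_trans (le_of_eq rfl) hmono)
    have h2 : R.meanS / R.delta ≤ γ a + |R.cfun a| * u := by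
      rw [div_le_iff₀ hδ]; linarith
    linarith
  refine ⟨hJint, hIeq, hlow, ?_⟩
  by_cases hgu2 : 0 < γ a - |R.cfun a| * u
  · have hcomp2 : ∀ᵐ s ∂ R.muS, s / (γ a - R.cfun a * s) ≤ s / (γ a - |R.cfun a| * u) := by
      filter_upwards [hden] with s hs
      exact div_le_div_of_nonneg_left hs.2.2.2.1 hgu2 hs.2.2.1
    have hmono := integral_mono_ae hJint (hSid.div_const _) hcomp2
    rw [integral_div] at hmono
    rw [hIeq] at hmono
    have h1 : R.delta * (γ a - |R.cfun a| * u) ≤ R.meanS := (le_div_iff₀ hgu2).mp hmono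
    have h2 : γ a - |R.cfun a| * u ≤ R.meanS / R.delta := by
      rw [le_div_iff₀ hδ]; linarith
    linarith
  · push_neg at hgu2
    linarith

end Gamma


section Pair

variable {R : RMT} {l u : ℝ} {γ : ℝ → ℝ}

lemma den_bounds (hδ : 0 < R.delta) (hprobS : IsProbabilityMeasure R.muS) (hl : 0 < l)
    (hsupp : msupport R.muS ⊆ Set.Icc l u) (hγ : R.IsGammaFun γ)
    {a : ℝ} (ha : R.tauT < a) (hsm : |R.cfun a| * u < (R.meanS / R.delta) / 4) :
    ∀ᵐ s ∂ R.muS, (R.meanS / R.delta) / 2 ≤ γ a - R.cfun a * s ∧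
      γ a - R.cfun a * s ≤ 2 * (R.meanS / R.delta) := by
  obtain ⟨-, -, hglo, hghi⟩ := gamma_core hδ hprobS hl hsupp hγ ha
  have hm := m_pos hδ hprobS hl hsupp
  filter_upwards [aeS hsupp] with s hs
  have habs : |R.cfun a * s| ≤ |R.cfun a| * u := by
    rw [abs_mul]
    refine mul_le_mul_of_nonneg_left ?_ (abs_nonneg _)
    rw [abs_of_nonneg (by linarith [hs.1] : (0:ℝ) ≤ s)]
    exact hs.2.1
  rw [abs_le] at habs
  constructor <;> linarith [habs.1, habs.2]

set_option maxHeartbeats 2000000 in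
lemma pair_identity (hδ : 0 < R.delta) (hprobS : IsProbabilityMeasure R.muS) (hl : 0 < l)
    (hsupp : msupport R.muS ⊆ Set.Icc l u) (hγ : R.IsGammaFun γ)
    {a a' : ℝ} (ha : R.tauT < a) (hsm : |R.cfun a| * u < (R.meanS / R.delta) / 4)
    (ha' : R.tauT < a') (hsm' : |R.cfun a'| * u < (R.meanS / R.delta) / 4) :
    0 ≤ (∫ s, s ^ 2 / ((γ a' - R.cfun a' * s) * (γ a - R.cfun a * s)) ∂ R.muS) ∧
    (∫ s, s ^ 2 / ((γ a' - R.cfun a' * s) * (γ a - R.cfun a * s)) ∂ R.muS) ≤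
      u ^ 2 / ((R.meanS / R.delta / 2) * (R.meanS / R.delta / 2)) ∧
    R.meanS / ((2 * (R.meanS / R.delta)) * (2 * (R.meanS / R.delta))) ≤
      (∫ s, s / ((γ a' - R.cfun a' * s) * (γ a - R.cfun a * s)) ∂ R.muS) ∧
    (γ a' - γ a) * (∫ s, s / ((γ a' - R.cfun a' * s) * (γ a - R.cfun a * s)) ∂ R.muS) =
      (R.cfun a' - R.cfun a) *
        (∫ s, s ^ 2 / ((γ a' - R.cfun a' * s) * (γ a - R.cfun a * s)) ∂ R.muS) := by
  have hm := m_pos hδ hprobS hl hsupp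
  set m := R.meanS / R.delta with hm_def
  have hd := den_bounds hδ hprobS hl hsupp hγ ha hsm
  have hd' := den_bounds hδ hprobS hl hsupp hγ ha' hsm'
  obtain ⟨hJint, hIeq, -, -⟩ := gamma_core hδ hprobS hl hsupp hγ ha
  obtain ⟨hJint', hIeq', -, -⟩ := gamma_core hδ hprobS hl hsupp hγ ha'
  have hmeasden : Measurable (fun s : ℝ => (γ a' - R.cfun a' * s) * (γ a - R.cfun a * s)) :=
    (measurable_const.sub (measurable_const.mul measurable_id)).mul
      (measurable_const.sub (measurable_const.mul measurable_id))
  have hmeas1 : AEStronglyMeasurable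
      (fun s : ℝ => s / ((γ a' - R.cfun a' * s) * (γ a - R.cfun a * s))) R.muS :=
    (measurable_id.div hmeasden).aestronglyMeasurable
  have hmeas2 : AEStronglyMeasurable
      (fun s : ℝ => s ^ 2 / ((γ a' - R.cfun a' * s) * (γ a - R.cfun a * s))) R.muS :=
    ((measurable_id.pow_const 2).div hmeasden).aestronglyMeasurable
  have haeb : ∀ᵐ s ∂ R.muS,
      (m / 2) * (m / 2) ≤ (γ a' - R.cfun a' * s) * (γ a - R.cfun a * s) ∧
      (γ a' - R.cfun a' * s) * (γ a - R.cfun a * s) ≤ (2 * m) * (2 * m) ∧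
      0 ≤ s ∧ s ≤ u := by
    filter_upwards [hd, hd', aeS hsupp] with s h1 h2 h3
    refine ⟨mul_le_mul h2.1 h1.1 (by linarith) (by linarith), ?_, by linarith [h3.1], h3.2.1⟩
    exact mul_le_mul h2.2 h1.2 (by linarith) (by linarith)
  have hint1 : Integrable
      (fun s : ℝ => s / ((γ a' - R.cfun a' * s) * (γ a - R.cfun a * s))) R.muS := by
    refine integrable_of_ae_bounded (b := u / ((m/2)*(m/2))) hmeas1 ?_
    filter_upwards [haeb] with s hs
    rw [abs_of_nonneg (div_nonneg hs.2.2.1 (by nlinarith [hs.1]))]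
    exact div_le_div₀ (by nlinarith [hs.2.2.1, hs.2.2.2]) hs.2.2.2 (by nlinarith) hs.1
  have hint2 : Integrable
      (fun s : ℝ => s ^ 2 / ((γ a' - R.cfun a' * s) * (γ a - R.cfun a * s))) R.muS := by
    refine integrable_of_ae_bounded (b := u^2 / ((m/2)*(m/2))) hmeas2 ?_
    filter_upwards [haeb] with s hs
    rw [abs_of_nonneg (div_nonneg (by positivity) (by nlinarith [hs.1]))]
    exact div_le_div₀ (by positivity) (by nlinarith [hs.2.2.1, hs.2.2.2]) (by nlinarith) hs.1
  have hA0 : 0 ≤ ∫ s, s ^ 2 / ((γ a' - R.cfun a' * s) * (γ a - R.cfun a * s)) ∂ R.muS := by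
    refine integral_nonneg_of_ae ?_
    filter_upwards [haeb] with s hs
    exact div_nonneg (by positivity) (by nlinarith [hs.1])
  have hAmax : (∫ s, s ^ 2 / ((γ a' - R.cfun a' * s) * (γ a - R.cfun a * s)) ∂ R.muS) ≤
      u ^ 2 / ((m/2)*(m/2)) := by
    have := integral_mono_ae hint2 (integrable_const (u^2 / ((m/2)*(m/2)))) ?_
    · simpa using this
    · filter_upwards [haeb] with s hs
      exact div_le_div₀ (by positivity) (by nlinarith [hs.2.2.1, hs.2.2.2]) (by nlinarith) hs.1
  have hSid : Integrable (fun s : ℝ => s) R.muS := integrable_S_id hl hsupp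
  have hBmin : R.meanS / ((2*m)*(2*m)) ≤
      ∫ s, s / ((γ a' - R.cfun a' * s) * (γ a - R.cfun a * s)) ∂ R.muS := by
    have hcomp : ∀ᵐ s ∂ R.muS, s / ((2*m)*(2*m)) ≤
        s / ((γ a' - R.cfun a' * s) * (γ a - R.cfun a * s)) := by
      filter_upwards [haeb] with s hs
      exact div_le_div_of_nonneg_left hs.2.2.1 (by nlinarith) hs.2.1
    have := integral_mono_ae (hSid.div_const _) hint1 hcomp
    rwa [integral_div] at this
  refine ⟨hA0, hAmax, hBmin, ?_⟩
  have h0 : (∫ s, (s / (γ a' - R.cfun a' * s) - s / (γ a - R.cfun a * s)) ∂ R.muS) = 0 := by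
    rw [integral_sub hJint' hJint, hIeq', hIeq, sub_self]
  have hcongr : (fun s : ℝ => s / (γ a' - R.cfun a' * s) - s / (γ a - R.cfun a * s)) =ᵐ[R.muS]
      (fun s : ℝ => (-(γ a' - γ a)) * (s / ((γ a' - R.cfun a' * s) * (γ a - R.cfun a * s)))
        + (R.cfun a' - R.cfun a) *
          (s ^ 2 / ((γ a' - R.cfun a' * s) * (γ a - R.cfun a * s)))) := by
    filter_upwards [hd, hd'] with s h1 h2
    have hne1 : γ a' - R.cfun a' * s ≠ 0 := by intro h; rw [h] at h2; linarith [h2.1]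
    have hne2 : γ a - R.cfun a * s ≠ 0 := by intro h; rw [h] at h1; linarith [h1.1]
    rw [div_sub_div _ _ hne1 hne2, mul_div_assoc', mul_div_assoc', ← add_div]
    congr 1
    ring
  rw [integral_congr_ae hcongr, integral_add (hint1.const_mul _) (hint2.const_mul _),
    integral_const_mul, integral_const_mul] at h0
  linarith

end Pair


section DerivGamma

variable {R : RMT} {C l u : ℝ} {γ : ℝ → ℝ}

set_option maxHeartbeats 2000000 in
lemma deriv_psi (hδ : 0 < R.delta) (hprobT : IsProbabilityMeasure R.muT)
    (hprobS : IsProbabilityMeasure R.muS) (hl : 0 < l)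
    (hsupp : msupport R.muS ⊆ Set.Icc l u)
    (hsuppT : msupport R.muT ⊆ Set.Icc (-C) C) (hγ : R.IsGammaFun γ)
    {a₀ : ℝ} (ha₀ : R.tauT < a₀)
    (hsm₀ : |R.cfun a₀| * u < (R.meanS / R.delta) / 4) :
    ∃ q : ℝ,
      |q| ≤ (u ^ 2 / ((R.meanS / R.delta / 2) * (R.meanS / R.delta / 2))) /
        (R.meanS / ((2 * (R.meanS / R.delta)) * (2 * (R.meanS / R.delta)))) ∧
      DifferentiableAt ℝ (psifun γ) a₀ ∧
      deriv (psifun γ) a₀ = γ a₀ + a₀ * ((∫ t, -(t / (a₀ - t) ^ 2) ∂ R.muT) * q) := by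
  have hm := m_pos hδ hprobS hl hsupp
  set m := R.meanS / R.delta with hm_def
  set Amax := u ^ 2 / ((m / 2) * (m / 2)) with hAmax_def
  set Bmin := R.meanS / ((2 * m) * (2 * m)) with hBmin_def
  have hmeanS : 0 < R.meanS := lt_of_lt_of_le hl (meanS_bounds hprobS hl hsupp).1
  have hBminpos : 0 < Bmin := by
    rw [hBmin_def]; positivity
  have hAmax0 : 0 ≤ Amax := by
    rw [hAmax_def]; positivity
  have hc := hasDerivAt_cfun hprobT hsuppT ha₀
  have hccont : ContinuousAt R.cfun a₀ := hc.continuousAt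
  -- the good region
  have hU : ∀ᶠ a in 𝓝 a₀, R.tauT < a ∧ |R.cfun a| * u < m / 4 := by
    refine (eventually_gt_nhds ha₀).and ?_
    have hcont2 : Tendsto (fun a => |R.cfun a| * u) (𝓝 a₀) (𝓝 (|R.cfun a₀| * u)) :=
      (hccont.abs.mul continuousAt_const).tendsto
    exact hcont2.eventually_lt_const hsm₀
  set Afun := fun a => ∫ s, s ^ 2 / ((γ a - R.cfun a * s) * (γ a₀ - R.cfun a₀ * s)) ∂ R.muS
    with hAfun_def
  set Bfun := fun a => ∫ s, s / ((γ a - R.cfun a * s) * (γ a₀ - R.cfun a₀ * s)) ∂ R.muS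
    with hBfun_def
  have hpair : ∀ a, R.tauT < a → |R.cfun a| * u < m / 4 →
      0 ≤ Afun a ∧ Afun a ≤ Amax ∧ Bmin ≤ Bfun a ∧
      (γ a - γ a₀) * Bfun a = (R.cfun a - R.cfun a₀) * Afun a :=
    fun a ha hsm => pair_identity hδ hprobS hl hsupp hγ ha₀ hsm₀ ha hsm
  -- Lipschitz-type bound ⇒ continuity of γ at a₀
  have hlip : ∀ᶠ a in 𝓝 a₀, |γ a - γ a₀| ≤ (Amax / Bmin) * |R.cfun a - R.cfun a₀| := by
    filter_upwards [hU] with a ha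
    obtain ⟨hA0, hAle, hBge, hid⟩ := hpair a ha.1 ha.2
    have habs : |γ a - γ a₀| * Bfun a = |R.cfun a - R.cfun a₀| * Afun a := by
      have := congrArg abs hid
      rwa [abs_mul, abs_mul, abs_of_nonneg (le_trans (le_of_lt hBminpos) hBge),
        abs_of_nonneg hA0] at this
    have h1 : |γ a - γ a₀| * Bmin ≤ |R.cfun a - R.cfun a₀| * Amax := by
      calc |γ a - γ a₀| * Bmin ≤ |γ a - γ a₀| * Bfun a :=
            mul_le_mul_of_nonneg_left hBge (abs_nonneg _)
        _ = |R.cfun a - R.cfun a₀| * Afun a := habs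
        _ ≤ |R.cfun a - R.cfun a₀| * Amax := mul_le_mul_of_nonneg_left hAle (abs_nonneg _)
    rw [div_mul_eq_mul_div, le_div_iff₀ hBminpos]
    linarith [mul_comm |R.cfun a - R.cfun a₀| Amax]
  have hcdiff : Tendsto (fun a => |R.cfun a - R.cfun a₀|) (𝓝 a₀) (𝓝 0) := by
    have : Tendsto (fun a => R.cfun a - R.cfun a₀) (𝓝 a₀) (𝓝 (R.cfun a₀ - R.cfun a₀)) :=
      hccont.tendsto.sub tendsto_const_nhds
    simpa using this.abs
  have hγcont : Tendsto γ (𝓝 a₀) (𝓝 (γ a₀)) := by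
    have h0 : Tendsto (fun a => |γ a - γ a₀|) (𝓝 a₀) (𝓝 0) := by
      refine squeeze_zero' (Filter.Eventually.of_forall fun a => abs_nonneg _) hlip ?_
      simpa using hcdiff.const_mul (Amax / Bmin)
    rw [tendsto_iff_dist_tendsto_zero]
    simpa [Real.dist_eq] using h0
  -- dominated convergence for Afun and Bfun
  have hd₀ := den_bounds hδ hprobS hl hsupp hγ ha₀ hsm₀
  have hmeasden : ∀ a, Measurable
      (fun s : ℝ => (γ a - R.cfun a * s) * (γ a₀ - R.cfun a₀ * s)) := fun a =>
    (measurable_const.sub (measurable_const.mul measurable_id)).mul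
      (measurable_const.sub (measurable_const.mul measurable_id))
  have hdenconv : ∀ᵐ s ∂ R.muS, Tendsto
      (fun a => (γ a - R.cfun a * s) * (γ a₀ - R.cfun a₀ * s)) (𝓝 a₀)
      (𝓝 ((γ a₀ - R.cfun a₀ * s) * (γ a₀ - R.cfun a₀ * s))) ∧
      (m / 2) * (m / 2) ≤ (γ a₀ - R.cfun a₀ * s) * (γ a₀ - R.cfun a₀ * s) ∧ 0 ≤ s ∧ s ≤ u := by
    filter_upwards [hd₀, aeS hsupp] with s h1 h2
    refine ⟨((hγcont.sub (hccont.tendsto.mul tendsto_const_nhds)).mul tendsto_const_nhds), ?_,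
      by linarith [h2.1], h2.2.1⟩
    exact mul_le_mul h1.1 h1.1 (by linarith) (by linarith)
  have hbound_ev : ∀ᶠ a in 𝓝 a₀, ∀ᵐ s ∂ R.muS,
      (m / 2) * (m / 2) ≤ (γ a - R.cfun a * s) * (γ a₀ - R.cfun a₀ * s) ∧
      (γ a - R.cfun a * s) * (γ a₀ - R.cfun a₀ * s) ≤ (2 * m) * (2 * m) ∧ 0 ≤ s ∧ s ≤ u := by
    filter_upwards [hU] with a ha
    have hd := den_bounds hδ hprobS hl hsupp hγ ha.1 ha.2
    filter_upwards [hd, hd₀, aeS hsupp] with s h1 h2 h3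
    exact ⟨mul_le_mul h1.1 h2.1 (by linarith) (by linarith),
      mul_le_mul h1.2 h2.2 (by linarith) (by linarith), by linarith [h3.1], h3.2.1⟩
  have hAtend : Tendsto Afun (𝓝 a₀) (𝓝 (Afun a₀)) := by
    refine tendsto_integral_filter_of_dominated_convergence (fun _ => Amax)
      (Filter.Eventually.of_forall fun a =>
        ((measurable_id.pow_const 2).div (hmeasden a)).aestronglyMeasurable) ?_
      (integrable_const _) ?_
    · filter_upwards [hbound_ev] with a ha
      filter_upwards [ha] with s hs
      rw [Real.norm_eq_abs, abs_of_nonneg (div_nonneg (by positivity) (by nlinarith [hs.1]))]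
      exact div_le_div₀ (by positivity) (by nlinarith [hs.2.2.1, hs.2.2.2]) (by nlinarith) hs.1
    · filter_upwards [hdenconv] with s hs
      exact tendsto_const_nhds.div hs.1 (by nlinarith [hs.2.1])
  have hBtend : Tendsto Bfun (𝓝 a₀) (𝓝 (Bfun a₀)) := by
    refine tendsto_integral_filter_of_dominated_convergence
      (fun _ => u / ((m / 2) * (m / 2)))
      (Filter.Eventually.of_forall fun a =>
        (measurable_id.div (hmeasden a)).aestronglyMeasurable) ?_
      (integrable_const _) ?_
    · filter_upwards [hbound_ev] with a ha
      filter_upwards [ha] with s hs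
      rw [Real.norm_eq_abs, abs_of_nonneg (div_nonneg hs.2.2.1 (by nlinarith [hs.1]))]
      exact div_le_div₀ (by nlinarith [hs.2.2.1, hs.2.2.2]) hs.2.2.2 (by nlinarith) hs.1
    · filter_upwards [hdenconv] with s hs
      exact tendsto_const_nhds.div hs.1 (by nlinarith [hs.2.1])
  obtain ⟨hA00, hA0le, hB0ge, -⟩ := hpair a₀ ha₀ hsm₀
  have hB0pos : 0 < Bfun a₀ := lt_of_lt_of_le hBminpos hB0ge
  set q := Afun a₀ / Bfun a₀ with hq_def
  have hqbound : |q| ≤ Amax / Bmin := by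
    rw [hq_def, abs_of_nonneg (div_nonneg hA00 (le_of_lt hB0pos))]
    exact div_le_div₀ hAmax0 hA0le hBminpos hB0ge
  -- slope argument
  have hγder : HasDerivAt γ ((∫ t, -(t / (a₀ - t) ^ 2) ∂ R.muT) * q) a₀ := by
    rw [hasDerivAt_iff_tendsto_slope]
    have hslopec : Tendsto (slope R.cfun a₀) (𝓝[≠] a₀) (𝓝 (∫ t, -(t / (a₀ - t) ^ 2) ∂ R.muT)) :=
      hasDerivAt_iff_tendsto_slope.mp hc
    have hkey : ∀ᶠ a in 𝓝[≠] a₀,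
        slope R.cfun a₀ a * (Afun a / Bfun a) = slope γ a₀ a := by
      filter_upwards [eventually_nhdsWithin_of_eventually_nhds hU, self_mem_nhdsWithin]
        with a ha hne
      obtain ⟨hA0', hAle', hBge', hid'⟩ := hpair a ha.1 ha.2
      have hBne : Bfun a ≠ 0 := ne_of_gt (lt_of_lt_of_le hBminpos hBge')
      have hΔ : γ a - γ a₀ = (R.cfun a - R.cfun a₀) * Afun a / Bfun a := by
        rw [eq_div_iff hBne]; linarith
      rw [slope_def_field, slope_def_field, hΔ]
      ring
    have hprod : Tendsto (fun a => slope R.cfun a₀ a * (Afun a / Bfun a)) (𝓝[≠] a₀)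
        (𝓝 ((∫ t, -(t / (a₀ - t) ^ 2) ∂ R.muT) * q)) := by
      refine hslopec.mul ?_
      exact ((hAtend.mono_left nhdsWithin_le_nhds).div
        (hBtend.mono_left nhdsWithin_le_nhds) (ne_of_gt hB0pos))
    exact hprod.congr' hkey
  have hψder : HasDerivAt (psifun γ)
      (γ a₀ + a₀ * ((∫ t, -(t / (a₀ - t) ^ 2) ∂ R.muT) * q)) a₀ := by
    have := (hasDerivAt_id a₀).mul hγder
    rw [one_mul] at this
    exact this
  exact ⟨q, hqbound, hψder.differentiableAt, hψder.deriv⟩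

end DerivGamma


section Limits

variable {R : RMT} {C l u : ℝ} {γ : ℝ → ℝ}

lemma cfun_to_zero (hprobT : IsProbabilityMeasure R.muT)
    (hsuppT : msupport R.muT ⊆ Set.Icc (-C) C) :
    Tendsto (fun a => C / (a - R.tauT)) atTop (𝓝 0) := by
  have h1 : Tendsto (fun a : ℝ => a - R.tauT) atTop atTop :=
    tendsto_atTop_add_const_right _ _ tendsto_id
  have h2 : Tendsto (fun a : ℝ => (a - R.tauT)⁻¹) atTop (𝓝 0) := h1.inv_tendsto_atTop
  simpa [div_eq_mul_inv] using h2.const_mul C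

lemma ev_region (hδ : 0 < R.delta) (hprobT : IsProbabilityMeasure R.muT)
    (hprobS : IsProbabilityMeasure R.muS) (hl : 0 < l)
    (hsupp : msupport R.muS ⊆ Set.Icc l u)
    (hsuppT : msupport R.muT ⊆ Set.Icc (-C) C) :
    ∀ᶠ a in atTop, R.tauT < a ∧ |R.cfun a| * u < (R.meanS / R.delta) / 4 := by
  have hm := m_pos hδ hprobS hl hsupp
  have hu : 0 < u := lt_of_lt_of_le hl ((sig_bounds hprobS hsupp).1.trans (sig_bounds hprobS hsupp).2.1)
  have hc0 : Tendsto (fun a => C / (a - R.tauT) * u) atTop (𝓝 0) := by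
    simpa using (cfun_to_zero hprobT hsuppT).mul_const u
  filter_upwards [eventually_gt_atTop R.tauT,
    hc0.eventually_lt_const (by linarith : (0:ℝ) < (R.meanS / R.delta) / 4)] with a ha h2
  refine ⟨ha, lt_of_le_of_lt ?_ h2⟩
  exact mul_le_mul_of_nonneg_right (cfun_abs_le hprobT hsuppT ha) (le_of_lt hu)

lemma psi_tendsto_atTop (hδ : 0 < R.delta) (hprobT : IsProbabilityMeasure R.muT)
    (hprobS : IsProbabilityMeasure R.muS) (hl : 0 < l)
    (hsupp : msupport R.muS ⊆ Set.Icc l u)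
    (hsuppT : msupport R.muT ⊆ Set.Icc (-C) C) (hγ : R.IsGammaFun γ) :
    Tendsto (psifun γ) atTop atTop := by
  have hm := m_pos hδ hprobS hl hsupp
  set m := R.meanS / R.delta with hm_def
  refine tendsto_atTop_mono' atTop ?_ (tendsto_id.atTop_mul_const (by linarith : 0 < m / 2))
  filter_upwards [ev_region hδ hprobT hprobS hl hsupp hsuppT, eventually_ge_atTop (0:ℝ)]
    with a ha ha0
  obtain ⟨-, -, hglo, -⟩ := gamma_core hδ hprobS hl hsupp hγ ha.1
  have hγge : m / 2 ≤ γ a := by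
    have := ha.2
    linarith
  calc (id a) * (m / 2) ≤ a * γ a := mul_le_mul_of_nonneg_left hγge ha0
    _ = psifun γ a := rfl

lemma psi_tendsto_tau (hδ : 0 < R.delta) (hprobS : IsProbabilityMeasure R.muS) (hl : 0 < l)
    (hsupp : msupport R.muS ⊆ Set.Icc l u) (hγ : R.IsGammaFun γ) (hτ : 0 < R.tauT)
    (hTE1 : Tendsto (fun a => ∫ t, t / (a - t) ∂ R.muT) (𝓝[>] R.tauT) atTop) :
    Tendsto (psifun γ) (𝓝[>] R.tauT) atTop := by
  have hsSig : 0 < R.sSig := lt_of_lt_of_le hl (sig_bounds hprobS hsupp).2.2.1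
  have hTE1' : Tendsto R.cfun (𝓝[>] R.tauT) atTop := hTE1
  have hmain : Tendsto (fun a => (R.tauT * R.sSig) * R.cfun a) (𝓝[>] R.tauT) atTop :=
    hTE1'.const_mul_atTop (by positivity)
  refine tendsto_atTop_mono' _ ?_ hmain
  filter_upwards [hTE1'.eventually_gt_atTop 0, self_mem_nhdsWithin] with a hca ha
  have ha' : R.tauT < a := ha
  obtain ⟨hs_lt, -, -⟩ := hγ a ha'
  rw [RMT.sfun, if_pos hca] at hs_lt
  have hγpos : 0 < γ a := lt_trans (by positivity) hs_lt
  calc R.tauT * R.sSig * R.cfun a = R.tauT * (R.cfun a * R.sSig) := by ring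
    _ ≤ R.tauT * γ a := mul_le_mul_of_nonneg_left (le_of_lt hs_lt) (le_of_lt hτ)
    _ ≤ a * γ a := mul_le_mul_of_nonneg_right (le_of_lt ha') (le_of_lt hγpos)

set_option maxHeartbeats 1000000 in
lemma deriv_psi_tendsto (hδ : 0 < R.delta) (hprobT : IsProbabilityMeasure R.muT)
    (hprobS : IsProbabilityMeasure R.muS) (hl : 0 < l)
    (hsupp : msupport R.muS ⊆ Set.Icc l u)
    (hsuppT : msupport R.muT ⊆ Set.Icc (-C) C) (hγ : R.IsGammaFun γ) :
    Tendsto (fun a => deriv (psifun γ) a) atTop (𝓝 (R.meanS / R.delta)) := by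
  have hm := m_pos hδ hprobS hl hsupp
  set m := R.meanS / R.delta with hm_def
  have hu : 0 < u := lt_of_lt_of_le hl ((sig_bounds hprobS hsupp).1.trans (sig_bounds hprobS hsupp).2.1)
  set K := (u ^ 2 / ((m / 2) * (m / 2))) / (R.meanS / ((2 * m) * (2 * m))) with hK_def
  have hmeanS : 0 < R.meanS := lt_of_lt_of_le hl (meanS_bounds hprobS hl hsupp).1
  have hK0 : 0 ≤ K := by rw [hK_def]; positivity
  set hbnd := fun a => C / (a - R.tauT) * u + a * (C / (a - R.tauT) ^ 2) * K with hbnd_def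
  have hhto : Tendsto hbnd atTop (𝓝 0) := by
    have h1 : Tendsto (fun a => C / (a - R.tauT) * u) atTop (𝓝 0) := by
      simpa using (cfun_to_zero hprobT hsuppT).mul_const u
    have h2 : Tendsto (fun a => a * (C / (a - R.tauT) ^ 2) * K) atTop (𝓝 0) := by
      have hq : Tendsto (fun a : ℝ => a / (a - R.tauT)) atTop (𝓝 1) := by
        have hfrac : Tendsto (fun a : ℝ => 1 + R.tauT / (a - R.tauT)) atTop (𝓝 (1 + 0)) := by
          refine tendsto_const_nhds.add ?_
          have h3 : Tendsto (fun a : ℝ => (a - R.tauT)⁻¹) atTop (𝓝 0) :=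
            (tendsto_atTop_add_const_right _ _ tendsto_id).inv_tendsto_atTop
          simpa [div_eq_mul_inv] using h3.const_mul R.tauT
        rw [show (1:ℝ) = 1 + 0 by ring]
        refine hfrac.congr' ?_
        filter_upwards [eventually_gt_atTop R.tauT] with a ha
        have : a - R.tauT ≠ 0 := by linarith
        field_simp
        ring
      have hprod : Tendsto (fun a : ℝ => (a / (a - R.tauT)) * (C / (a - R.tauT)))
          atTop (𝓝 (1 * 0)) := hq.mul (cfun_to_zero hprobT hsuppT)
      have heq : ∀ᶠ a in atTop, (a / (a - R.tauT)) * (C / (a - R.tauT)) =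
          a * (C / (a - R.tauT) ^ 2) := by
        filter_upwards [eventually_gt_atTop R.tauT] with a ha
        have hne : a - R.tauT ≠ 0 := by linarith
        rw [div_mul_div_comm, ← pow_two, mul_div_assoc]
      have := (hprod.congr' heq).mul_const K
      simpa using this
    simpa using h1.add h2
  have hev : ∀ᶠ a in atTop, m - hbnd a ≤ deriv (psifun γ) a ∧ deriv (psifun γ) a ≤ m + hbnd a := by
    filter_upwards [ev_region hδ hprobT hprobS hl hsupp hsuppT, eventually_ge_atTop (0:ℝ)]
      with a ha ha0
    obtain ⟨q, hq, -, hderiv⟩ := deriv_psi hδ hprobT hprobS hl hsupp hsuppT hγ ha.1 ha.2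
    obtain ⟨-, -, hglo, hghi⟩ := gamma_core hδ hprobS hl hsupp hγ ha.1
    have hγbound : |γ a - m| ≤ C / (a - R.tauT) * u := by
      rw [abs_le]
      have hcb := cfun_abs_le hprobT hsuppT ha.1
      have := mul_le_mul_of_nonneg_right hcb (le_of_lt hu)
      constructor <;> linarith
    have hsecond : |a * ((∫ t, -(t / (a - t) ^ 2) ∂ R.muT) * q)| ≤
        a * (C / (a - R.tauT) ^ 2) * K := by
      rw [abs_mul, abs_mul, abs_of_nonneg ha0, mul_assoc]
      refine mul_le_mul_of_nonneg_left ?_ ha0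
      exact mul_le_mul (cfun_deriv_abs_le hprobT hsuppT ha.1) hq (abs_nonneg _)
        (div_nonneg (C_nonneg hprobT hsuppT) (by positivity))
    have habs : |deriv (psifun γ) a - m| ≤ hbnd a := by
      rw [hderiv]
      calc |γ a + a * ((∫ t, -(t / (a - t) ^ 2) ∂ R.muT) * q) - m|
          ≤ |γ a - m| + |a * ((∫ t, -(t / (a - t) ^ 2) ∂ R.muT) * q)| := by
            rw [show γ a + a * ((∫ t, -(t / (a - t) ^ 2) ∂ R.muT) * q) - m =
              (γ a - m) + a * ((∫ t, -(t / (a - t) ^ 2) ∂ R.muT) * q) by ring]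
            exact abs_add_le _ _
        _ ≤ hbnd a := by rw [hbnd_def]; dsimp only; exact add_le_add hγbound hsecond
    rw [abs_le] at habs
    constructor <;> linarith [habs.1, habs.2]
  refine tendsto_of_tendsto_of_tendsto_of_le_of_le'
    (g := fun a => m - hbnd a) (h := fun a => m + hbnd a) ?_ ?_ ?_ ?_
  · simpa using tendsto_const_nhds.sub hhto
  · simpa using tendsto_const_nhds.add hhto
  · filter_upwards [hev] with a ha using ha.1
  · filter_upwards [hev] with a ha using ha.2

end Limits

/-- **Lemma (limits of `ψ` and `ψ'`).** Under the thick-edge assumptions: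
`ψ'(a) → (∫ s dμ_Σ)/δ > 0` as `a → ∞`; `ψ(a) → ∞` as `a → ∞` and as
`a ↓ sup supp μ_T`; consequently the set of critical points of `ψ` in
`(sup supp μ_T, ∞)` is nonempty and bounded above. -/
theorem psi_limits_and_critical_points
    (R : RMT) (hB : R.Basic) (hTE : R.ThickEdge)
    (γ : ℝ → ℝ) (hγ : R.IsGammaFun γ) :
    Tendsto (fun a => deriv (psifun γ) a) atTop (𝓝 (R.meanS / R.delta)) ∧
    0 < R.meanS / R.delta ∧
    Tendsto (psifun γ) atTop atTop ∧
    Tendsto (psifun γ) (𝓝[>] R.tauT) atTop ∧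
    {a : ℝ | R.tauT < a ∧ deriv (psifun γ) a = 0}.Nonempty ∧
    BddAbove {a : ℝ | R.tauT < a ∧ deriv (psifun γ) a = 0} := by
  obtain ⟨hδ, hprobT, hprobS, ⟨C, hsuppT⟩, ⟨l, u, hl, hsupp⟩, -, -, hτpos⟩ := hB
  have hm := m_pos hδ hprobS hl hsupp
  have h1 : Tendsto (fun a => deriv (psifun γ) a) atTop (𝓝 (R.meanS / R.delta)) :=
    deriv_psi_tendsto hδ hprobT hprobS hl hsupp hsuppT hγ
  have h3 : Tendsto (psifun γ) atTop atTop :=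
    psi_tendsto_atTop hδ hprobT hprobS hl hsupp hsuppT hγ
  have h4 : Tendsto (psifun γ) (𝓝[>] R.tauT) atTop :=
    psi_tendsto_tau hδ hprobS hl hsupp hγ hτpos hTE.1
  have hbdd : BddAbove {a : ℝ | R.tauT < a ∧ deriv (psifun γ) a = 0} := by
    obtain ⟨N, hN⟩ := eventually_atTop.mp (h1.eventually_const_lt hm)
    refine ⟨N, fun x hx => ?_⟩
    by_contra hcon
    push_neg at hcon
    exact absurd hx.2.symm (ne_of_lt (hN x (le_of_lt hcon)))
  refine ⟨h1, hm, h3, h4, ?_, hbdd⟩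
  by_cases hdiff : ∀ a ∈ Set.Ioi R.tauT, DifferentiableAt ℝ (psifun γ) a
  · set ψ := psifun γ with hψ
    have hcont : ContinuousOn ψ (Set.Ioi R.tauT) := fun a ha =>
      ((hdiff a ha).continuousAt).continuousWithinAt
    set a₁ := R.tauT + 1 with ha₁_def
    have ha₁ : R.tauT < a₁ := by rw [ha₁_def]; linarith
    have hev1 : ∀ᶠ a in 𝓝[>] R.tauT, ψ a₁ < ψ a := h4.eventually_gt_atTop (ψ a₁)
    obtain ⟨b, hb, hIoo⟩ := (nhdsGT_basis R.tauT).eventually_iff.mp hev1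
    set p := (R.tauT + min b a₁) / 2 with hp_def
    have hmin : R.tauT < min b a₁ := lt_min hb ha₁
    have hτp : R.tauT < p := by rw [hp_def]; linarith
    have hpb : p < b := by
      have : p < min b a₁ := by rw [hp_def]; linarith
      exact lt_of_lt_of_le this (min_le_left _ _)
    have hpa₁ : p ≤ a₁ := by
      have : p < min b a₁ := by rw [hp_def]; linarith
      linarith [min_le_right b a₁]
    obtain ⟨N, hN⟩ := eventually_atTop.mp (h3.eventually_gt_atTop (ψ a₁))
    set q := max N a₁ with hq_def
    have hpq : p ≤ q := le_trans hpa₁ (le_max_right _ _)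
    have hsubset : Set.Icc p q ⊆ Set.Ioi R.tauT := fun x hx =>
      lt_of_lt_of_le hτp hx.1
    obtain ⟨astar, hastar_mem, hastar_min⟩ :=
      (isCompact_Icc (a := p) (b := q)).exists_isMinOn ⟨p, le_refl p, hpq⟩
        (hcont.mono hsubset)
    have ha₁mem : a₁ ∈ Set.Icc p q := ⟨hpa₁, le_max_right _ _⟩
    have h6 : ψ astar ≤ ψ a₁ := isMinOn_iff.mp hastar_min a₁ ha₁mem
    have hglobal : ∀ x ∈ Set.Ioi R.tauT, ψ astar ≤ ψ x := by
      intro x hx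
      rcases le_or_gt x q with hxq | hxq
      · rcases le_or_gt p x with hpx | hpx
        · exact isMinOn_iff.mp hastar_min x ⟨hpx, hxq⟩
        · have h5 : ψ a₁ < ψ x := hIoo ⟨hx, by linarith⟩
          linarith
      · have h5 : ψ a₁ < ψ x := hN x (le_trans (le_max_left _ _) (le_of_lt hxq))
        linarith
    have hτastar : R.tauT < astar := lt_of_lt_of_le hτp hastar_mem.1
    have hlocal : IsLocalMin ψ astar :=
      Filter.eventually_of_mem (isOpen_Ioi.mem_nhds hτastar) (fun x hx => hglobal x hx)
    exact ⟨astar, hτastar, hlocal.deriv_eq_zero⟩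
  · push_neg at hdiff
    obtain ⟨a, ha, hnd⟩ := hdiff
    exact ⟨a, ha, deriv_zero_of_not_differentiableAt hnd⟩


end SpecGLM
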